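/- For every positive integer n and real number x, the sum over all set partitions w of {1,...,n} of x^(number of parts of w) times the product over parts of (size of the part)! times (number of parts of w − 1)! equals (n−1)!·((1+x)^n − 1). -/

import Mathlib

open Finset

variable {α : Type*} [DecidableEq α]

/-- Remove a part from a finpartition. -/
def Finpartition.delete {s : Finset α} (P : Finpartition s) {B : Finset α}
    (hB : B ∈ P.parts) : Finpartition (s \ B) :=
  P.ofSubset (erase_subset _ _) (by
    ext a
    simp only [mem_sup, mem_erase, id, mem_sdiff]
    constructor
    · rintro ⟨p, ⟨hpB, hp⟩, ha⟩
      refine ⟨P.le hp ha, fun haB => hpB ?_⟩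
      exact P.eq_of_mem_parts hp hB ha haB
    · rintro ⟨has, haB⟩
      obtain ⟨p, hp, hap⟩ := P.exists_mem has
      exact ⟨p, ⟨fun h => haB (h ▸ hap), hp⟩, hap⟩)

@[simp] lemma Finpartition.delete_parts {s : Finset α} (P : Finpartition s) {B : Finset α}
    (hB : B ∈ P.parts) : (P.delete hB).parts = P.parts.erase B := rfl

lemma master (s : Finset α) (f : Finset α → Finset (Finset α) → ℝ) :
    ∑ w : Finpartition s, ∑ B ∈ w.parts, f B (w.parts.erase B)
    = ∑ B ∈ s.powerset.filter (·.Nonempty),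
        ∑ w' : Finpartition (s \ B), f B w'.parts := by
  classical
  rw [← Finset.sum_sigma (univ : Finset (Finpartition s)) (fun w => w.parts)
    (fun p => f p.2 (p.1.parts.erase p.2))]
  rw [← Finset.sum_sigma (s.powerset.filter (·.Nonempty))
    (fun B => (univ : Finset (Finpartition (s \ B))))
    (fun q => f q.1 q.2.parts)]
  refine Finset.sum_bij'
    (fun p hp => (⟨p.2, p.1.delete (by simpa using (mem_sigma.1 hp).2)⟩ :
      (B : Finset α) × Finpartition (s \ B)))
    (fun q hq => ⟨(q.2.extend (b := q.1)
        (by simpa [bot_eq_empty, ← nonempty_iff_ne_empty] using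
          (mem_filter.1 (mem_sigma.1 hq).1).2)
        (disjoint_sdiff_self_left)
        (by rw [sdiff_sup_cancel (mem_powerset.1 (mem_filter.1 (mem_sigma.1 hq).1).1)])), q.1⟩)
    ?_ ?_ ?_ ?_ ?_
  · intro p hp
    have hB := (mem_sigma.1 hp).2
    simp only [mem_sigma, mem_filter, mem_powerset, mem_univ, and_true]
    exact ⟨p.1.le hB, p.1.nonempty_of_mem_parts hB⟩
  · intro q hq
    simp only [mem_sigma, mem_univ, true_and, Finpartition.extend]
    exact mem_insert_self _ _
  · intro p hp
    have hB := (mem_sigma.1 hp).2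
    refine Sigma.ext ?_ (by rfl)
    apply Finpartition.ext
    simp [Finpartition.extend, Finpartition.delete_parts, insert_erase hB]
  · intro q hq
    have hne : q.1 ∉ q.2.parts := by
      intro h
      have := q.2.le h
      have hq1 : q.1.Nonempty :=
        (mem_filter.1 (mem_sigma.1 hq).1).2
      obtain ⟨a, ha⟩ := hq1
      exact (mem_sdiff.1 (this ha)).2 ha
    refine Sigma.ext (by rfl) ?_
    apply heq_of_eq
    apply Finpartition.ext
    simp [Finpartition.extend, Finpartition.delete_parts, erase_insert hne]
  · intro p hp
    rfl

noncomputable def H (x : ℝ) (s : Finset α) : ℝ :=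
  ∑ w : Finpartition s, x ^ w.parts.card *
    (∏ p ∈ w.parts, (Nat.factorial p.card : ℝ)) * (Nat.factorial w.parts.card : ℝ)

lemma parts_of_empty (w : Finpartition (∅ : Finset α)) : w.parts = ∅ := by
  rw [eq_empty_iff_forall_notMem]
  intro p hp
  obtain ⟨a, ha⟩ := w.nonempty_of_mem_parts hp
  exact absurd (w.le hp ha) (notMem_empty a)

lemma H_empty (x : ℝ) : H x (∅ : Finset α) = 1 := by
  classical
  haveI : Subsingleton (Finpartition (∅ : Finset α)) :=
    ⟨fun a b => Finpartition.ext (by rw [parts_of_empty, parts_of_empty])⟩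
  rw [H, Fintype.sum_subsingleton _ ((Finpartition.empty (Finset α)).copy bot_eq_empty)]
  simp [parts_of_empty]

lemma prod_erase_mul_fact {s B : Finset α} {w : Finpartition s} (hB : B ∈ w.parts) :
    (Nat.factorial B.card : ℝ) * ∏ p ∈ w.parts.erase B, (Nat.factorial p.card : ℝ)
    = ∏ p ∈ w.parts, (Nat.factorial p.card : ℝ) := by
  rw [← Finset.mul_prod_erase _ _ hB]

lemma H_rec (x : ℝ) (s : Finset α) (hs : s.Nonempty) :
    H x s = ∑ B ∈ s.powerset.filter (·.Nonempty),
      x * (Nat.factorial B.card : ℝ) * H x (s \ B) := by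
  classical
  have key := master s (fun B P => x * (Nat.factorial B.card : ℝ) *
    (x ^ P.card * (∏ p ∈ P, (Nat.factorial p.card : ℝ)) * (Nat.factorial P.card : ℝ)))
  have lhs_eq : ∀ w : Finpartition s,
      ∑ B ∈ w.parts, (x * (Nat.factorial B.card : ℝ) *
        (x ^ (w.parts.erase B).card * (∏ p ∈ w.parts.erase B, (Nat.factorial p.card : ℝ)) *
          (Nat.factorial (w.parts.erase B).card : ℝ)))
      = x ^ w.parts.card * (∏ p ∈ w.parts, (Nat.factorial p.card : ℝ)) *
          (Nat.factorial w.parts.card : ℝ) := by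
    intro w
    have hpos : 0 < w.parts.card :=
      Finset.card_pos.2 (w.parts_nonempty (by simpa [bot_eq_empty, ← nonempty_iff_ne_empty]))
    obtain ⟨t', ht'⟩ : ∃ t', w.parts.card = t' + 1 :=
      ⟨w.parts.card - 1, (Nat.succ_pred_eq_of_pos hpos).symm⟩
    calc ∑ B ∈ w.parts, (x * (Nat.factorial B.card : ℝ) *
        (x ^ (w.parts.erase B).card * (∏ p ∈ w.parts.erase B, (Nat.factorial p.card : ℝ)) *
          (Nat.factorial (w.parts.erase B).card : ℝ)))
        = ∑ B ∈ w.parts, x ^ w.parts.card * (∏ p ∈ w.parts, (Nat.factorial p.card : ℝ)) *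
            (Nat.factorial (w.parts.card - 1) : ℝ) := by
          refine Finset.sum_congr rfl fun B hB => ?_
          rw [card_erase_of_mem hB, ← prod_erase_mul_fact hB, ht']
          simp only [Nat.add_sub_cancel]
          ring
      _ = (w.parts.card : ℝ) * (x ^ w.parts.card *
            (∏ p ∈ w.parts, (Nat.factorial p.card : ℝ)) *
            (Nat.factorial (w.parts.card - 1) : ℝ)) := by
          rw [Finset.sum_const, nsmul_eq_mul]
      _ = x ^ w.parts.card * (∏ p ∈ w.parts, (Nat.factorial p.card : ℝ)) *
            (Nat.factorial w.parts.card : ℝ) := by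
          rw [ht']
          simp only [Nat.add_sub_cancel, Nat.factorial_succ]
          push_cast
          ring
  calc H x s = ∑ w : Finpartition s, ∑ B ∈ w.parts, (x * (Nat.factorial B.card : ℝ) *
        (x ^ (w.parts.erase B).card * (∏ p ∈ w.parts.erase B, (Nat.factorial p.card : ℝ)) *
          (Nat.factorial (w.parts.erase B).card : ℝ))) := by
        rw [H]; exact (Finset.sum_congr rfl fun w _ => (lhs_eq w).symm)
    _ = ∑ B ∈ s.powerset.filter (·.Nonempty), ∑ w' : Finpartition (s \ B),
          x * (Nat.factorial B.card : ℝ) *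
            (x ^ w'.parts.card * (∏ p ∈ w'.parts, (Nat.factorial p.card : ℝ)) *
              (Nat.factorial w'.parts.card : ℝ)) := key
    _ = ∑ B ∈ s.powerset.filter (·.Nonempty),
          x * (Nat.factorial B.card : ℝ) * H x (s \ B) := by
        refine Finset.sum_congr rfl fun B _ => ?_
        rw [H, Finset.mul_sum]

noncomputable def Hnum (x : ℝ) (m : ℕ) : ℝ :=
  if m = 0 then 1 else (Nat.factorial m : ℝ) * x * (1 + x) ^ (m - 1)

lemma geom_aux (x : ℝ) (m : ℕ) :
    (∑ j ∈ Finset.range m, (1 + x) ^ j) * x = (1 + x) ^ m - 1 := by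
  have := geom_sum_mul (1 + x) m
  simpa using this

lemma Hnum_succ (x : ℝ) (m : ℕ) :
    Hnum x (m + 1) = (Nat.factorial (m + 1) : ℝ) * x * (1 + x) ^ m := by
  rw [Hnum, if_neg (Nat.succ_ne_zero m), Nat.add_sub_cancel]

lemma numeric (x : ℝ) (m' : ℕ) :
    ∑ k ∈ Finset.range (m' + 1 + 1),
        (Nat.choose (m' + 1) k : ℝ) * (x * (Nat.factorial k : ℝ) * Hnum x (m' + 1 - k))
      - x * Hnum x (m' + 1) = Hnum x (m' + 1) := by
  rw [Finset.sum_range_succ]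
  have hlast : (Nat.choose (m' + 1) (m' + 1) : ℝ) *
      (x * (Nat.factorial (m' + 1) : ℝ) * Hnum x (m' + 1 - (m' + 1))) =
      x * (Nat.factorial (m' + 1) : ℝ) := by
    simp [Hnum]
  have hstep : ∀ k ∈ Finset.range (m' + 1),
      (Nat.choose (m' + 1) k : ℝ) * (x * (Nat.factorial k : ℝ) * Hnum x (m' + 1 - k))
      = ((Nat.factorial (m' + 1) : ℝ) * x ^ 2) * (1 + x) ^ (m' - k) := by
    intro k hk
    have hk' : k ≤ m' := Nat.lt_succ_iff.1 (Finset.mem_range.1 hk)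
    have h1 : m' + 1 - k ≠ 0 := by omega
    have h2 : m' + 1 - k - 1 = m' - k := by omega
    have h3 : (Nat.choose (m' + 1) k : ℝ) * (Nat.factorial k : ℝ) *
        (Nat.factorial (m' + 1 - k) : ℝ) = (Nat.factorial (m' + 1) : ℝ) := by
      have := Nat.choose_mul_factorial_mul_factorial (le_of_lt (Nat.lt_succ_of_le hk'))
      push_cast [← this]
      ring
    rw [Hnum, if_neg h1, h2]
    calc (Nat.choose (m' + 1) k : ℝ) * (x * (Nat.factorial k : ℝ) *
          ((Nat.factorial (m' + 1 - k) : ℝ) * x * (1 + x) ^ (m' - k)))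
        = ((Nat.choose (m' + 1) k : ℝ) * (Nat.factorial k : ℝ) *
            (Nat.factorial (m' + 1 - k) : ℝ)) * x ^ 2 * (1 + x) ^ (m' - k) := by ring
      _ = ((Nat.factorial (m' + 1) : ℝ) * x ^ 2) * (1 + x) ^ (m' - k) := by rw [h3]
  rw [Finset.sum_congr rfl hstep, ← Finset.mul_sum]
  have hrefl : ∑ k ∈ Finset.range (m' + 1), (1 + x) ^ (m' - k)
      = ∑ j ∈ Finset.range (m' + 1), (1 + x) ^ j := by
    have := Finset.sum_range_reflect (fun j => (1 + x) ^ j) (m' + 1)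
    simpa using this
  rw [hrefl, hlast]
  have hg := geom_aux x (m' + 1)
  rw [pow_succ] at hg
  rw [Hnum_succ]
  linear_combination ((Nat.factorial (m' + 1) : ℝ) * x) * hg

lemma H_eval (x : ℝ) : ∀ (m : ℕ) (s : Finset α), s.card = m → H x s = Hnum x m := by
  intro m
  induction m using Nat.strong_induction_on with
  | _ m IH =>
    intro s hcard
    rcases s.eq_empty_or_nonempty with rfl | hs
    · rw [H_empty, ← hcard, Finset.card_empty, Hnum, if_pos rfl]
    · obtain ⟨m', rfl⟩ : ∃ m', m = m' + 1 := by
        refine ⟨m - 1, ?_⟩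
        have : 0 < m := hcard ▸ Finset.card_pos.2 hs
        omega
      rw [H_rec x s hs]
      have hfil : s.powerset.filter (·.Nonempty) = s.powerset.erase ∅ := by
        ext B
        simp [Finset.nonempty_iff_ne_empty, and_comm]
      have hIH : ∀ B ∈ s.powerset.erase ∅,
          x * (Nat.factorial B.card : ℝ) * H x (s \ B)
          = x * (Nat.factorial B.card : ℝ) * Hnum x (m' + 1 - B.card) := by
        intro B hB
        obtain ⟨hBne, hBs⟩ := Finset.mem_erase.1 hB
        have hBs' : B ⊆ s := Finset.mem_powerset.1 hBs
        have hBcard : 0 < B.card := Finset.card_pos.2 (Finset.nonempty_iff_ne_empty.2 hBne)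
        have hcd : (s \ B).card = m' + 1 - B.card := by
          rw [Finset.card_sdiff_of_subset hBs', hcard]
        have hlt : (s \ B).card < m' + 1 := by
          rw [hcd]; omega
        rw [IH _ hlt _ rfl, hcd]
      rw [hfil, Finset.sum_congr rfl hIH]
      have hsplit : ∑ B ∈ s.powerset.erase ∅,
          x * (Nat.factorial B.card : ℝ) * Hnum x (m' + 1 - B.card)
          = (∑ B ∈ s.powerset, x * (Nat.factorial B.card : ℝ) * Hnum x (m' + 1 - B.card))
            - x * Hnum x (m' + 1) := by
        rw [← Finset.add_sum_erase _ _ (Finset.empty_mem_powerset s)]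
        simp
      rw [hsplit]
      have hpow : ∑ B ∈ s.powerset, x * (Nat.factorial B.card : ℝ) * Hnum x (m' + 1 - B.card)
          = ∑ k ∈ Finset.range (m' + 1 + 1),
              (Nat.choose (m' + 1) k : ℝ) * (x * (Nat.factorial k : ℝ) * Hnum x (m' + 1 - k)) := by
        rw [Finset.powerset_card_disjiUnion]
        erw [Finset.sum_disjiUnion]
        rw [hcard]
        refine Finset.sum_congr rfl fun k _ => ?_
        rw [Finset.sum_congr rfl (fun B hB => by
          rw [(Finset.mem_powersetCard.1 hB).2]), Finset.sum_const,
          Finset.card_powersetCard, hcard, nsmul_eq_mul]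
      rw [hpow, numeric]

lemma Tsum (x : ℝ) : ∀ m : ℕ,
    x ^ 2 * (∑ k ∈ Finset.range m, ((k : ℝ) + 1) * (1 + x) ^ (m - 1 - k))
    = (1 + x) ^ (m + 1) - 1 - ((m : ℝ) + 1) * x := by
  intro m
  induction m with
  | zero => simp
  | succ m IH =>
    have hstep : ∀ k ∈ Finset.range m,
        ((k : ℝ) + 1) * (1 + x) ^ (m + 1 - 1 - k)
        = (((k : ℝ) + 1) * (1 + x) ^ (m - 1 - k)) * (1 + x) := by
      intro k hk
      have hk' : k < m := Finset.mem_range.1 hk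
      rw [show m + 1 - 1 - k = (m - 1 - k) + 1 by omega, pow_succ]
      ring
    rw [Finset.sum_range_succ, Finset.sum_congr rfl hstep, ← Finset.sum_mul]
    have hlast : ((m : ℝ) + 1) * (1 + x) ^ (m + 1 - 1 - m) = (m : ℝ) + 1 := by
      rw [show m + 1 - 1 - m = 0 by omega, pow_zero, mul_one]
    rw [hlast]
    push_cast
    rw [show m + 1 + 1 = (m + 1) + 1 by rfl, pow_succ]
    linear_combination (1 + x) * IH

lemma final_numeric (x : ℝ) (m' : ℕ) :
    ∑ k ∈ Finset.range (m' + 1),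
        (Nat.choose m' k : ℝ) * (x * (Nat.factorial (k + 1) : ℝ) * Hnum x (m' - k))
    = (Nat.factorial m' : ℝ) * ((1 + x) ^ (m' + 1) - 1) := by
  rw [Finset.sum_range_succ]
  have hlast : (Nat.choose m' m' : ℝ) * (x * (Nat.factorial (m' + 1) : ℝ) * Hnum x (m' - m'))
      = x * (Nat.factorial (m' + 1) : ℝ) := by
    simp [Hnum]
  have hstep : ∀ k ∈ Finset.range m',
      (Nat.choose m' k : ℝ) * (x * (Nat.factorial (k + 1) : ℝ) * Hnum x (m' - k))
      = ((Nat.factorial m' : ℝ) * x ^ 2) * (((k : ℝ) + 1) * (1 + x) ^ (m' - 1 - k)) := by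
    intro k hk
    have hk' : k < m' := Finset.mem_range.1 hk
    have h1 : m' - k ≠ 0 := by omega
    have h2 : m' - k - 1 = m' - 1 - k := by omega
    have h3 : (Nat.choose m' k : ℝ) * (Nat.factorial k : ℝ) * (Nat.factorial (m' - k) : ℝ)
        = (Nat.factorial m' : ℝ) := by
      have := Nat.choose_mul_factorial_mul_factorial (le_of_lt hk')
      push_cast [← this]
      ring
    rw [Hnum, if_neg h1, h2, Nat.factorial_succ]
    push_cast
    calc (Nat.choose m' k : ℝ) * (x * (((k : ℝ) + 1) * (Nat.factorial k : ℝ)) *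
          ((Nat.factorial (m' - k) : ℝ) * x * (1 + x) ^ (m' - 1 - k)))
        = ((Nat.choose m' k : ℝ) * (Nat.factorial k : ℝ) * (Nat.factorial (m' - k) : ℝ)) *
            (x ^ 2 * (((k : ℝ) + 1) * (1 + x) ^ (m' - 1 - k))) := by ring
      _ = ((Nat.factorial m' : ℝ) * x ^ 2) * (((k : ℝ) + 1) * (1 + x) ^ (m' - 1 - k)) := by
          rw [h3]; ring
  rw [Finset.sum_congr rfl hstep, ← Finset.mul_sum, hlast]
  have hT := Tsum x m'
  rw [Nat.factorial_succ]
  push_cast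
  linear_combination (Nat.factorial m' : ℝ) * hT

theorem g_eval (n : ℕ) (hn : 0 < n) (x : ℝ) :
    ∑ w : Finpartition (Finset.univ : Finset (Fin n)),
      x ^ w.parts.card * (∏ p ∈ w.parts, (Nat.factorial p.card : ℝ)) *
        (Nat.factorial (w.parts.card - 1) : ℝ)
    = (Nat.factorial (n - 1) : ℝ) * ((1 + x) ^ n - 1) := by
  classical
  have hne : (Finset.univ : Finset (Fin n)).Nonempty := by
    haveI : NeZero n := ⟨hn.ne'⟩
    exact univ_nonempty
  set e : Fin n := ⟨0, hn⟩ with he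
  set f : Finset (Fin n) → Finset (Finset (Fin n)) → ℝ := fun B P =>
    if e ∈ B then x * (Nat.factorial B.card : ℝ) *
      (x ^ P.card * (∏ p ∈ P, (Nat.factorial p.card : ℝ)) * (Nat.factorial P.card : ℝ))
    else 0 with hf
  -- Step A : rewrite each summand as a sum over parts
  have stepA : ∀ w : Finpartition (Finset.univ : Finset (Fin n)),
      x ^ w.parts.card * (∏ p ∈ w.parts, (Nat.factorial p.card : ℝ)) *
        (Nat.factorial (w.parts.card - 1) : ℝ)
      = ∑ B ∈ w.parts, f B (w.parts.erase B) := by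
    intro w
    obtain ⟨B₀, hB₀, heB₀⟩ := w.exists_mem (mem_univ e)
    have hpos : 0 < w.parts.card :=
      Finset.card_pos.2 (w.parts_nonempty (by
        simpa [bot_eq_empty, ← nonempty_iff_ne_empty] using hne))
    obtain ⟨t', ht'⟩ : ∃ t', w.parts.card = t' + 1 :=
      ⟨w.parts.card - 1, (Nat.succ_pred_eq_of_pos hpos).symm⟩
    rw [Finset.sum_eq_single_of_mem B₀ hB₀ (fun B hB hBne => by
      rw [hf]
      simp only
      rw [if_neg (fun heB => hBne (w.eq_of_mem_parts hB hB₀ heB heB₀))])]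
    rw [hf]
    simp only
    rw [if_pos heB₀, card_erase_of_mem hB₀, ← prod_erase_mul_fact hB₀, ht']
    simp only [Nat.add_sub_cancel]
    ring
  rw [Finset.sum_congr rfl (fun w _ => stepA w), master]
  -- Step B : compute the inner sum
  have stepB : ∀ B ∈ (Finset.univ : Finset (Fin n)).powerset.filter (·.Nonempty),
      ∑ w' : Finpartition ((Finset.univ : Finset (Fin n)) \ B), f B w'.parts
      = if e ∈ B then x * (Nat.factorial B.card : ℝ) *
          H x ((Finset.univ : Finset (Fin n)) \ B) else 0 := by
    intro B _
    rw [hf]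
    simp only
    split_ifs with heB
    · rw [H, Finset.mul_sum]
    · simp
  rw [Finset.sum_congr rfl stepB]
  -- Step C : drop the filter
  have stepC : ∑ B ∈ (Finset.univ : Finset (Fin n)).powerset.filter (·.Nonempty),
      (if e ∈ B then x * (Nat.factorial B.card : ℝ) *
        H x ((Finset.univ : Finset (Fin n)) \ B) else 0)
      = ∑ B ∈ (Finset.univ : Finset (Fin n)).powerset,
      (if e ∈ B then x * (Nat.factorial B.card : ℝ) *
        H x ((Finset.univ : Finset (Fin n)) \ B) else 0) := by
    rw [Finset.sum_filter]
    refine Finset.sum_congr rfl fun B _ => ?_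
    by_cases heB : e ∈ B
    · rw [if_pos ⟨e, heB⟩]
    · simp [heB]
  rw [stepC]
  -- Step D : reindex by subsets not containing e
  set t : Finset (Fin n) := Finset.univ.erase e with ht
  have het : e ∉ t := notMem_erase _ _
  have huniv : (Finset.univ : Finset (Fin n)) = insert e t := (insert_erase (mem_univ e)).symm
  have stepD : ∑ B ∈ (Finset.univ : Finset (Fin n)).powerset,
      (if e ∈ B then x * (Nat.factorial B.card : ℝ) *
        H x ((Finset.univ : Finset (Fin n)) \ B) else 0)
      = ∑ C ∈ t.powerset, x * (Nat.factorial (insert e C).card : ℝ) *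
          H x ((Finset.univ : Finset (Fin n)) \ insert e C) := by
    rw [huniv, Finset.powerset_insert, Finset.sum_union, Finset.sum_image]
    · have h1 : ∑ B ∈ t.powerset,
          (if e ∈ B then x * (Nat.factorial B.card : ℝ) *
            H x (insert e t \ B) else 0) = 0 := by
        refine Finset.sum_eq_zero fun B hB => ?_
        rw [if_neg (fun heB => het (Finset.mem_powerset.1 hB heB))]
      rw [h1, zero_add]
      refine Finset.sum_congr rfl fun C _ => ?_
      rw [if_pos (mem_insert_self e C), ← huniv]
    · intro C hC D hD hCD
      have heC : e ∉ C := fun h => het (Finset.mem_powerset.1 hC h)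
      have heD : e ∉ D := fun h => het (Finset.mem_powerset.1 hD h)
      rw [← Finset.erase_insert heC, ← Finset.erase_insert heD, hCD]
    · rw [Finset.disjoint_left]
      intro B hB hB'
      obtain ⟨C, hC, rfl⟩ := Finset.mem_image.1 hB'
      exact het (Finset.mem_powerset.1 hB (mem_insert_self e C))
  rw [stepD]
  -- Step E : evaluate via Hnum
  have htcard : t.card = n - 1 := by
    rw [ht, Finset.card_erase_of_mem (mem_univ e), Finset.card_univ, Fintype.card_fin]
  obtain ⟨m', hm'⟩ : ∃ m', n = m' + 1 := ⟨n - 1, by omega⟩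
  have htcard' : t.card = m' := by omega
  have stepE : ∀ C ∈ t.powerset,
      x * (Nat.factorial (insert e C).card : ℝ) *
        H x ((Finset.univ : Finset (Fin n)) \ insert e C)
      = (x * (Nat.factorial (C.card + 1) : ℝ) * Hnum x (m' - C.card)) := by
    intro C hC
    have heC : e ∉ C := fun h => het (Finset.mem_powerset.1 hC h)
    have hCt : C ⊆ t := Finset.mem_powerset.1 hC
    have hcardi : (insert e C).card = C.card + 1 := Finset.card_insert_of_notMem heC
    have hCle : C.card ≤ m' := htcard' ▸ Finset.card_le_card hCt
    have hsd : ((Finset.univ : Finset (Fin n)) \ insert e C).card = m' - C.card := by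
      rw [Finset.card_sdiff_of_subset (Finset.subset_univ _), Finset.card_univ, Fintype.card_fin,
        hcardi]
      omega
    rw [hcardi, H_eval x _ _ hsd]
  rw [Finset.sum_congr rfl stepE]
  -- Step F : sum over powerset by cardinality
  have stepF : ∑ C ∈ t.powerset, (x * (Nat.factorial (C.card + 1) : ℝ) * Hnum x (m' - C.card))
      = ∑ k ∈ Finset.range (m' + 1),
          (Nat.choose m' k : ℝ) * (x * (Nat.factorial (k + 1) : ℝ) * Hnum x (m' - k)) := by
    rw [Finset.powerset_card_disjiUnion]
    erw [Finset.sum_disjiUnion]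
    rw [htcard']
    refine Finset.sum_congr rfl fun k _ => ?_
    rw [Finset.sum_congr rfl (fun C hC => by
      rw [(Finset.mem_powersetCard.1 hC).2]), Finset.sum_const,
      Finset.card_powersetCard, htcard', nsmul_eq_mul]
  rw [stepF, final_numeric, hm']
  simp
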